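/- arXiv:2210.09703 — 3 statements merged into one kernel-verified Lean document; each statement's English description precedes it below -/
import Mathlib

section
/- Let W be a general safety objective over C whose prefix preorder ⪯_W is well-founded. Then the trivial one-state memory structure M_triv suffices to play optimally for W in all arenas (i.e., memoryless strategies suffice) if and only if the prefix preorder ⪯_W is total (every two finite words are comparable for ⪯_W). -/
set_option autoImplicit false

namespace RegularMemory

/-- Concatenation of a finite word with an infinite word. -/
def wcat {C : Type} (w : List C) (x : ℕ → C) : ℕ → C := fun n =>
  if h : n < w.length then w.get ⟨n, h⟩ else x (n - w.length)

/-- The infinite word `w^ω` (junk value if `w` is empty). -/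
noncomputable def wpow {C : Type} [Nonempty C] : List C → ℕ → C
  | [] => fun _ => Classical.arbitrary C
  | (a :: l) => fun n => (a :: l).get ⟨n % (a :: l).length, Nat.mod_lt n (Nat.succ_pos _)⟩

/-- Winning continuations `w⁻¹W` of the finite word `w` for the objective `W`. -/
def contAfter {C : Type} (W : Set (ℕ → C)) (w : List C) : Set (ℕ → C) :=
  {x | wcat w x ∈ W}

/-- Prefix preorder `w₁ ⪯_W w₂`. -/
def prefLe {C : Type} (W : Set (ℕ → C)) (w₁ w₂ : List C) : Prop :=
  contAfter W w₁ ⊆ contAfter W w₂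

/-- Strict prefix relation `w₁ ≺_W w₂`. -/
def prefLt {C : Type} (W : Set (ℕ → C)) (w₁ w₂ : List C) : Prop :=
  prefLe W w₁ w₂ ∧ ¬ prefLe W w₂ w₁

/-- Comparability for the prefix preorder. -/
def PrefComparable {C : Type} (W : Set (ℕ → C)) (w₁ w₂ : List C) : Prop :=
  prefLe W w₁ w₂ ∨ prefLe W w₂ w₁

/-- The general reachability objective derived from `A`: infinite words with a prefix in `A`. -/
def ReachObj {C : Type} (A : Set (List C)) : Set (ℕ → C) :=
  {x | ∃ n : ℕ, (List.ofFn fun i : Fin n => x i) ∈ A}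

/-- The general safety objective derived from `A`. -/
def SafeObj {C : Type} (A : Set (List C)) : Set (ℕ → C) :=
  (ReachObj A)ᶜ

/-- The prefix preorder of `W` has finitely many equivalence classes. -/
def FinClasses {C : Type} (W : Set (ℕ → C)) : Prop :=
  (Set.range fun w : List C => contAfter W w).Finite

/-- The prefix preorder of `W` is well-founded:
every nonempty chain contains a minimal element. -/
def PrefWellFounded {C : Type} (W : Set (ℕ → C)) : Prop :=
  ∀ S : Set (List C), S.Nonempty →
    (∀ w₁ ∈ S, ∀ w₂ ∈ S, PrefComparable W w₁ w₂) →
    ∃ w₀ ∈ S, ∀ w ∈ S, ¬ prefLt W w w₀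

/-- Chromatic memory structure. -/
structure MemStruct (C : Type) where
  M : Type
  init : M
  upd : M → C → M

/-- Extension of the update function to finite words. -/
def MemStruct.updStar {C : Type} (N : MemStruct C) (m : N.M) (w : List C) : N.M :=
  w.foldl N.upd m

/-- The trivial one-state memory structure. -/
def trivMem (C : Type) : MemStruct C :=
  ⟨Unit, (), fun _ _ => ()⟩

/-- `W` is `N`-strongly-monotone. -/
def StronglyMonotone {C : Type} (N : MemStruct C) (W : Set (ℕ → C)) : Prop :=
  ∀ w₁ w₂ : List C,
    N.updStar N.init w₁ = N.updStar N.init w₂ → PrefComparable W w₁ w₂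

/-- `W` is `N`-progress-consistent. -/
def ProgressConsistent {C : Type} [Nonempty C] (N : MemStruct C) (W : Set (ℕ → C)) : Prop :=
  ∀ (m : N.M) (w₁ w₂ : List C),
    N.updStar N.init w₁ = m → N.updStar m w₂ = m →
    prefLt W w₁ (w₁ ++ w₂) → wcat w₁ (wpow w₂) ∈ W

/-- Two-player arena with colored edges; Player-1 vertices have outgoing edges
(so that strategies of Player 1 exist). -/
structure Arena (C : Type) where
  V : Type
  P1 : V → Prop
  E : Set (V × C × V)
  succ : ∀ v : V, P1 v → ∃ e ∈ E, e.1 = v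

namespace Arena

/-- Valid histories starting at a given vertex. -/
def HistFrom {C : Type} (A : Arena C) : A.V → List (A.V × C × A.V) → Prop
  | _, [] => True
  | v, e :: l => e ∈ A.E ∧ e.1 = v ∧ HistFrom A e.2.2 l

/-- Endpoint of a history. -/
def endFrom {C : Type} (A : Arena C) : A.V → List (A.V × C × A.V) → A.V
  | v, [] => v
  | _, e :: l => endFrom A e.2.2 l

/-- Infinite plays from a vertex. -/
def PlayFrom {C : Type} (A : Arena C) (v : A.V) (π : ℕ → A.V × C × A.V) : Prop :=
  (π 0).1 = v ∧ ∀ n : ℕ, π n ∈ A.E ∧ (π n).2.2 = (π (n + 1)).1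

/-- Colors along a play. -/
def playCol {C V : Type} (π : ℕ → V × C × V) : ℕ → C :=
  fun n => (π n).2.1

/-- Strategies of Player 1: on every valid history ending in a Player-1 vertex,
the strategy picks an edge leaving that vertex. -/
structure Strategy {C : Type} (A : Arena C) where
  next : A.V → List (A.V × C × A.V) → A.V × C × A.V
  legal : ∀ (v : A.V) (l : List (A.V × C × A.V)),
    A.HistFrom v l → A.P1 (A.endFrom v l) →
      next v l ∈ A.E ∧ (next v l).1 = A.endFrom v l

/-- A play from `v` is consistent with the strategy `σ`. -/
def Strategy.Consistent {C : Type} {A : Arena C} (σ : A.Strategy) (v : A.V)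
    (π : ℕ → A.V × C × A.V) : Prop :=
  ∀ n : ℕ, A.P1 (A.endFrom v (List.ofFn fun i : Fin n => π i)) →
    π n = σ.next v (List.ofFn fun i : Fin n => π i)

/-- `σ` is winning from `v` for the objective `W`. -/
def Strategy.WinningFrom {C : Type} {A : Arena C} (σ : A.Strategy)
    (W : Set (ℕ → C)) (v : A.V) : Prop :=
  ∀ π : ℕ → A.V × C × A.V, A.PlayFrom v π → σ.Consistent v π → playCol π ∈ W

/-- `σ` is optimal in `(A, W)`: winning from every vertex from which
Player 1 has some winning strategy. -/
def Strategy.Optimal {C : Type} {A : Arena C} (σ : A.Strategy) (W : Set (ℕ → C)) : Prop :=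
  ∀ v : A.V, (∃ σ' : A.Strategy, σ'.WinningFrom W v) → σ.WinningFrom W v

/-- `σ` is based on the memory structure `N`. -/
def Strategy.BasedOn {C : Type} {A : Arena C} (σ : A.Strategy) (N : MemStruct C) : Prop :=
  ∃ nxt : A.V → N.M → A.V × C × A.V,
    ∀ (v : A.V) (l : List (A.V × C × A.V)),
      A.HistFrom v l → A.P1 (A.endFrom v l) →
        σ.next v l = nxt (A.endFrom v l) (N.updStar N.init (l.map fun e => e.2.1))

/-- Finite arena: finitely many vertices and edges. -/
def IsFinite {C : Type} (A : Arena C) : Prop := Finite A.V ∧ A.E.Finite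

/-- Finitely branching arena. -/
def FinBranching {C : Type} (A : Arena C) : Prop :=
  ∀ v : A.V, {e ∈ A.E | e.1 = v}.Finite

/-- One-player arena of Player 1. -/
def OneP1 {C : Type} (A : Arena C) : Prop := ∀ v : A.V, A.P1 v

end Arena

/-- `N` suffices to play optimally for `W` in all arenas of the class `P`. -/
def SufficesIn {C : Type} (N : MemStruct C) (W : Set (ℕ → C))
    (P : Arena C → Prop) : Prop :=
  ∀ A : Arena C, P A → ∃ σ : A.Strategy, σ.BasedOn N ∧ σ.Optimal W

/-- Deterministic automaton (with complete transition function). -/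
structure DetAuto (C : Type) where
  Q : Type
  init : Q
  δ : Q → C → Q
  F : Set Q

/-- Extension of the transition function to finite words. -/
def DetAuto.δStar {C : Type} (D : DetAuto C) (q : D.Q) (w : List C) : D.Q :=
  w.foldl D.δ q

/-- Language recognized by `D`. -/
def DetAuto.lang {C : Type} (D : DetAuto C) : Set (List C) :=
  {w | D.δStar D.init w ∈ D.F}

/-- Prefix preorder extended to automaton states. -/
def statePrefLe {C : Type} (D : DetAuto C) (W : Set (ℕ → C)) (q₁ q₂ : D.Q) : Prop :=
  ∀ w₁ w₂ : List C,
    D.δStar D.init w₁ = q₁ → D.δStar D.init w₂ = q₂ → prefLe W w₁ w₂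

def statePrefLt {C : Type} (D : DetAuto C) (W : Set (ℕ → C)) (q₁ q₂ : D.Q) : Prop :=
  statePrefLe D W q₁ q₂ ∧ ¬ statePrefLe D W q₂ q₁

def StateComparable {C : Type} (D : DetAuto C) (W : Set (ℕ → C)) (q₁ q₂ : D.Q) : Prop :=
  statePrefLe D W q₁ q₂ ∨ statePrefLe D W q₂ q₁

/-- Monotone decomposition of `D` with `k` sets. -/
def MonotoneDecomposition {C : Type} (D : DetAuto C) (W : Set (ℕ → C))
    {k : ℕ} (Γ : Fin k → Set D.Q) : Prop :=
  (∀ q : D.Q, ∃ i : Fin k, q ∈ Γ i) ∧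
  (∀ (c : C) (i : Fin k), ∃ j : Fin k, (fun q => D.δ q c) '' Γ i ⊆ Γ j) ∧
  (∀ i : Fin k, ∀ q₁ ∈ Γ i, ∀ q₂ ∈ Γ i, StateComparable D W q₁ q₂)

end RegularMemory


namespace RegularMemory

section WordLemmas

variable {C : Type}

lemma wcat_nil (x : ℕ → C) : wcat ([] : List C) x = x := by
  funext n; simp [wcat]

/-- prepend one letter to an infinite word -/
def fcons (c : C) (x : ℕ → C) : ℕ → C := fun n => Nat.casesOn n c (fun k => x k)

lemma wcat_snoc (w : List C) (c : C) (x : ℕ → C) :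
    wcat (w ++ [c]) x = wcat w (fcons c x) := by
  funext n
  simp only [wcat, List.length_append, List.length_cons, List.length_nil, Nat.zero_add]
  rcases lt_trichotomy n w.length with h | h | h
  · rw [dif_pos (by omega), dif_pos h]
    simp [List.get_eq_getElem, List.getElem_append_left h]
  · subst h
    rw [dif_pos (by omega), dif_neg (by omega)]
    simp [List.get_eq_getElem, fcons]
  · rw [dif_neg (by omega), dif_neg (by omega)]
    obtain ⟨k, rfl⟩ : ∃ k, n = w.length + (k + 1) := ⟨n - w.length - 1, by omega⟩
    have h1 : w.length + (k + 1) - (w.length + 1) = k := by omega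
    have h2 : w.length + (k + 1) - w.length = k + 1 := by omega
    rw [h1, h2]
    rfl

lemma contAfter_nil (W : Set (ℕ → C)) : contAfter W [] = W := by
  ext x; simp [contAfter, wcat_nil]

lemma contAfter_snoc (W : Set (ℕ → C)) (w : List C) (c : C) :
    contAfter W (w ++ [c]) = {y | fcons c y ∈ contAfter W w} := by
  ext y; simp [contAfter, wcat_snoc]

lemma prefLe_snoc {W : Set (ℕ → C)} {w u : List C} (c : C) (h : prefLe W w u) :
    prefLe W (w ++ [c]) (u ++ [c]) := by
  intro y hy
  rw [contAfter_snoc] at hy ⊢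
  exact h hy

lemma ofFn_take_wcat (w : List C) (x : ℕ → C) :
    (List.ofFn fun i : Fin w.length => wcat w x i) = w := by
  apply List.ext_getElem
  · simp
  · intro n h1 h2
    simp only [List.getElem_ofFn]
    simp [wcat, h2, List.get_eq_getElem]

lemma ofFn_snoc {α : Type*} (f : ℕ → α) (n : ℕ) :
    (List.ofFn fun i : Fin (n + 1) => f i) = (List.ofFn fun i : Fin n => f i) ++ [f n] := by
  rw [List.ofFn_succ']
  simp [List.concat_eq_append]

end WordLemmas

section ArenaLemmas

variable {C : Type} {A : Arena C}

lemma endFrom_append (v : A.V) (l : List (A.V × C × A.V)) (e : A.V × C × A.V) :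
    A.endFrom v (l ++ [e]) = e.2.2 := by
  induction l generalizing v with
  | nil => rfl
  | cons f l ih => exact ih f.2.2

lemma histFrom_append {v : A.V} {l : List (A.V × C × A.V)} {e : A.V × C × A.V} :
    A.HistFrom v (l ++ [e]) ↔ A.HistFrom v l ∧ e ∈ A.E ∧ e.1 = A.endFrom v l := by
  induction l generalizing v with
  | nil => simp [Arena.HistFrom, Arena.endFrom]
  | cons f l ih =>
    simp only [List.cons_append, Arena.HistFrom, Arena.endFrom, List.append_eq, ih]
    tauto

lemma endFrom_play {v : A.V} {π : ℕ → A.V × C × A.V} (hp : A.PlayFrom v π) (n : ℕ) :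
    A.endFrom v (List.ofFn fun i : Fin n => π i) = (π n).1 := by
  induction n with
  | zero => exact hp.1.symm
  | succ n ih =>
    rw [ofFn_snoc, endFrom_append]
    exact (hp.2 n).2

lemma histFrom_play {v : A.V} {π : ℕ → A.V × C × A.V} (hp : A.PlayFrom v π) (n : ℕ) :
    A.HistFrom v (List.ofFn fun i : Fin n => π i) := by
  induction n with
  | zero => trivial
  | succ n ih =>
    rw [ofFn_snoc, histFrom_append]
    exact ⟨ih, (hp.2 n).1, by rw [endFrom_play hp n]⟩

/-- Build a play step-by-step, following a move function `g` that maintains invariant `I`. -/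
lemma exists_play (σ : A.Strategy) (v : A.V) (I : List (A.V × C × A.V) → Prop)
    (g : List (A.V × C × A.V) → A.V × C × A.V)
    (hI0 : I [])
    (hg : ∀ l, I l → A.HistFrom v l →
      g l ∈ A.E ∧ (g l).1 = A.endFrom v l ∧ I (l ++ [g l]))
    (hgσ : ∀ l, I l → A.HistFrom v l → A.P1 (A.endFrom v l) → g l = σ.next v l) :
    ∃ π : ℕ → A.V × C × A.V, A.PlayFrom v π ∧ σ.Consistent v π ∧
      ∀ n, I (List.ofFn fun i : Fin n => π i) := by
  let hist : ℕ → List (A.V × C × A.V) := fun n => Nat.rec [] (fun _ l => l ++ [g l]) n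
  have hist_succ : ∀ n, hist (n + 1) = hist n ++ [g (hist n)] := fun n => rfl
  have inv : ∀ n, I (hist n) ∧ A.HistFrom v (hist n) := by
    intro n
    induction n with
    | zero => exact ⟨hI0, trivial⟩
    | succ n ih =>
      obtain ⟨h1, h2, h3⟩ := hg (hist n) ih.1 ih.2
      refine ⟨h3, ?_⟩
      rw [hist_succ, histFrom_append]
      exact ⟨ih.2, h1, h2⟩
  have hofn : ∀ n, (List.ofFn fun i : Fin n => g (hist i)) = hist n := by
    intro n
    induction n with
    | zero => rfl
    | succ n ih => rw [ofFn_snoc (fun k => g (hist k)) n, ih, hist_succ]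
  refine ⟨fun n => g (hist n), ⟨?_, ?_⟩, ?_, ?_⟩
  · exact ((hg (hist 0) (inv 0).1 (inv 0).2).2.1)
  · intro n
    refine ⟨(hg (hist n) (inv n).1 (inv n).2).1, ?_⟩
    rw [(hg (hist (n+1)) (inv (n+1)).1 (inv (n+1)).2).2.1, hist_succ, endFrom_append]
  · intro n hP1
    rw [hofn] at hP1 ⊢
    exact hgσ (hist n) (inv n).1 (inv n).2 hP1
  · intro n
    rw [hofn]
    exact (inv n).1

end ArenaLemmas

section Dies

variable {C : Type}

/-- Derivations witnessing that Player 1 can force all plays from `v` to be finite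
(reach a Player-2 deadlock). -/
inductive DiesT (A : Arena C) : A.V → Type where
  | p1 (v : A.V) (e : A.V × C × A.V) (h1 : A.P1 v) (he : e ∈ A.E) (hs : e.1 = v)
      (d : DiesT A e.2.2) : DiesT A v
  | p2 (v : A.V) (h1 : ¬ A.P1 v)
      (f : ∀ e : A.V × C × A.V, e ∈ A.E → e.1 = v → DiesT A e.2.2) : DiesT A v

def Dies (A : Arena C) (v : A.V) : Prop := Nonempty (DiesT A v)

noncomputable def DiesT.rank {A : Arena C} : ∀ {v : A.V}, DiesT A v → Ordinal.{0}
  | _, .p1 _ _ _ _ _ d => Order.succ d.rank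
  | v, .p2 _ _ f =>
      Order.succ (⨆ p : {e : A.V × C × A.V // e ∈ A.E ∧ e.1 = v}, (f p.1 p.2.1 p.2.2).rank)

/-- Rank of a vertex: infimum of ranks of derivations (junk if none). -/
noncomputable def dRank (A : Arena C) (v : A.V) : Ordinal.{0} :=
  sInf (Set.range fun d : DiesT A v => d.rank)

lemma dRank_le {A : Arena C} {v : A.V} (d : DiesT A v) : dRank A v ≤ d.rank :=
  csInf_le (OrderBot.bddBelow _) ⟨d, rfl⟩

lemma dRank_eq {A : Arena C} {v : A.V} (h : Dies A v) :
    ∃ d : DiesT A v, d.rank = dRank A v := by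
  obtain ⟨d⟩ := h
  have hne : (Set.range fun d : DiesT A v => d.rank).Nonempty := ⟨d.rank, d, rfl⟩
  exact csInf_mem hne

lemma dies_descent_p1 {A : Arena C} {v : A.V} (h : Dies A v) (h1 : A.P1 v) :
    ∃ e, e ∈ A.E ∧ e.1 = v ∧ Dies A e.2.2 ∧ dRank A e.2.2 < dRank A v := by
  obtain ⟨d, hd⟩ := dRank_eq h
  cases d with
  | p1 _ e _ he hs d' =>
    refine ⟨e, he, hs, ⟨d'⟩, ?_⟩
    calc dRank A e.2.2 ≤ d'.rank := dRank_le d'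
    _ < Order.succ d'.rank := Order.lt_succ _
    _ = dRank A v := hd
  | p2 _ h1' _ => exact absurd h1 h1'

lemma dies_descent_p2 {A : Arena C} {v : A.V} (h : Dies A v) (h1 : ¬ A.P1 v) :
    ∀ e, e ∈ A.E → e.1 = v → Dies A e.2.2 ∧ dRank A e.2.2 < dRank A v := by
  obtain ⟨d, hd⟩ := dRank_eq h
  cases d with
  | p1 _ e h1' _ _ _ => exact absurd h1' h1
  | p2 _ _ f =>
    intro e he hs
    refine ⟨⟨f e he hs⟩, ?_⟩
    calc dRank A e.2.2 ≤ (f e he hs).rank := dRank_le _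
    _ ≤ ⨆ p : {e : A.V × C × A.V // e ∈ A.E ∧ e.1 = v}, (f p.1 p.2.1 p.2.2).rank := by
          exact le_ciSup (Ordinal.bddAbove_range _) (⟨e, he, hs⟩ : {e : A.V × C × A.V // e ∈ A.E ∧ e.1 = v})
    _ < _ := Order.lt_succ _
    _ = dRank A v := hd

lemma not_dies_p1 {A : Arena C} {v : A.V} (h : ¬ Dies A v) (h1 : A.P1 v) :
    ∀ e, e ∈ A.E → e.1 = v → ¬ Dies A e.2.2 := by
  intro e he hs ⟨d⟩
  exact h ⟨.p1 v e h1 he hs d⟩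

lemma not_dies_p2 {A : Arena C} {v : A.V} (h : ¬ Dies A v) (h1 : ¬ A.P1 v) :
    ∃ e, e ∈ A.E ∧ e.1 = v ∧ ¬ Dies A e.2.2 := by
  by_contra hc
  push_neg at hc
  exact h ⟨.p2 v h1 fun e he hs => (hc e he hs).some⟩

/-- From a non-dying vertex, every strategy admits a consistent infinite play. -/
lemma not_dies_exists_play [Nonempty C] {A : Arena C} {v : A.V} (h : ¬ Dies A v)
    (σ : A.Strategy) :
    ∃ π : ℕ → A.V × C × A.V, A.PlayFrom v π ∧ σ.Consistent v π := by
  classical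
  obtain ⟨π, h1, h2, _⟩ := exists_play σ v (fun l => ¬ Dies A (A.endFrom v l))
    (fun l =>
      if hp : A.P1 (A.endFrom v l) then σ.next v l
      else if hx : ∃ e, e ∈ A.E ∧ e.1 = A.endFrom v l ∧ ¬ Dies A e.2.2 then hx.choose
      else (v, Classical.arbitrary C, v))
    h
    (by
      intro l hI hh
      by_cases hp : A.P1 (A.endFrom v l)
      · obtain ⟨he, hs⟩ := σ.legal v l hh hp
        simp only [dif_pos hp]
        exact ⟨he, hs, by rw [endFrom_append]; exact not_dies_p1 hI hp _ he hs⟩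
      · obtain ⟨e, he, hs, hnd⟩ := not_dies_p2 hI hp
        have hx : ∃ e, e ∈ A.E ∧ e.1 = A.endFrom v l ∧ ¬ Dies A e.2.2 := ⟨e, he, hs, hnd⟩
        simp only [dif_neg hp, dif_pos hx]
        obtain ⟨h1', h2', h3'⟩ := hx.choose_spec
        exact ⟨h1', h2', by rw [endFrom_append]; exact h3'⟩)
    (by intro l hI hh hp; simp only [dif_pos hp])
  exact ⟨π, h1, h2⟩

/-- No infinite descending sequence of ordinals. -/
lemma no_ordinal_descent (f : ℕ → Ordinal.{0}) (h : ∀ n, f (n + 1) < f n) : False := by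
  obtain ⟨a, ⟨k, rfl⟩, hmin⟩ := Ordinal.lt_wf.has_min (Set.range f) ⟨f 0, 0, rfl⟩
  exact hmin (f (k + 1)) ⟨k + 1, rfl⟩ (h k)

end Dies

section Shift

variable {C : Type}

/-- Shifting a winning strategy along its first move (or any Player-2 move). -/
lemma shift_winning {A : Arena C} {X : Set (ℕ → C)} {x : A.V} {σ : A.Strategy}
    (hwin : σ.WinningFrom X x) (e : A.V × C × A.V) (he : e ∈ A.E) (hs : e.1 = x)
    (hp : A.P1 x → e = σ.next x []) :
    ∃ σ' : A.Strategy, σ'.WinningFrom {y | fcons e.2.1 y ∈ X} e.2.2 := by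
  classical
  refine ⟨⟨fun v' l => if v' = e.2.2 then σ.next x (e :: l) else σ.next v' l, ?_⟩, ?_⟩
  · intro v' l hh hp1
    by_cases hv : v' = e.2.2
    · subst hv
      simp only [if_pos rfl]
      have hh' : A.HistFrom x (e :: l) := ⟨he, hs, hh⟩
      have hend : A.endFrom x (e :: l) = A.endFrom e.2.2 l := rfl
      have := σ.legal x (e :: l) hh' (by rw [hend]; exact hp1)
      rw [hend] at this
      exact this
    · simp only [if_neg hv]
      exact σ.legal v' l hh hp1
  · intro π hplay hcons
    set π₀ : ℕ → A.V × C × A.V := fun k => Nat.casesOn k e (fun k' => π k') with hπ₀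
    have hofn : ∀ n, (List.ofFn fun i : Fin (n + 1) => π₀ i) =
        e :: (List.ofFn fun i : Fin n => π i) := by
      intro n
      rw [List.ofFn_succ]
      rfl
    have hplay₀ : A.PlayFrom x π₀ := by
      constructor
      · exact hs
      · intro n
        cases n with
        | zero => exact ⟨he, hplay.1.symm⟩
        | succ n => exact hplay.2 n
    have hcons₀ : σ.Consistent x π₀ := by
      intro n hP1
      cases n with
      | zero =>
        simp only [List.ofFn_zero] at hP1 ⊢
        exact hp hP1
      | succ n =>
        rw [hofn] at hP1 ⊢
        have hP1' : A.P1 (A.endFrom e.2.2 (List.ofFn fun i : Fin n => π i)) := hP1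
        have := hcons n hP1'
        simp only [if_pos rfl] at this
        exact this
    have hX := hwin π₀ hplay₀ hcons₀
    have hcol : Arena.playCol π₀ = fcons e.2.1 (Arena.playCol π) := by
      funext n
      cases n <;> rfl
    rw [hcol] at hX
    exact hX

/-- Player 1 wins from `v` with debt `w`. -/
def Wins (A : Arena C) (W : Set (ℕ → C)) (v : A.V) (w : List C) : Prop :=
  ∃ σ : A.Strategy, σ.WinningFrom (contAfter W w) v

lemma wins_mono {A : Arena C} {W : Set (ℕ → C)} {v : A.V} {w w' : List C}
    (h : prefLe W w w') (hw : Wins A W v w) : Wins A W v w' := by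
  obtain ⟨σ, hσ⟩ := hw
  exact ⟨σ, fun π h1 h2 => h (hσ π h1 h2)⟩

lemma wins_step {A : Arena C} {W : Set (ℕ → C)} {v : A.V} {w : List C}
    (hw : Wins A W v w) (e : A.V × C × A.V) (he : e ∈ A.E) (hs : e.1 = v)
    (hp : A.P1 v → e = hw.choose.next v []) :
    Wins A W e.2.2 (w ++ [e.2.1]) := by
  obtain ⟨σ', hσ'⟩ := shift_winning hw.choose_spec e he hs hp
  refine ⟨σ', ?_⟩
  rw [contAfter_snoc]
  exact hσ'

end Shift

section Backward

variable {C : Type}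

lemma exists_minDebt (A : Arena C) (W : Set (ℕ → C)) (hwf : PrefWellFounded W)
    (htot : ∀ w₁ w₂ : List C, PrefComparable W w₁ w₂) (v : A.V)
    (h : ∃ w, Wins A W v w) :
    ∃ w₀, Wins A W v w₀ ∧ ∀ w, Wins A W v w → prefLe W w₀ w := by
  obtain ⟨w, hw⟩ := h
  obtain ⟨w₀, hw₀, hmin⟩ := hwf {w | Wins A W v w} ⟨w, hw⟩ (fun a _ b _ => htot a b)
  refine ⟨w₀, hw₀, ?_⟩
  intro u hu
  rcases htot w₀ u with h | h
  · exact h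
  · have := hmin u hu
    simp only [prefLt, not_and, not_not] at this
    exact this h

noncomputable def minDebt (A : Arena C) (W : Set (ℕ → C)) (hwf : PrefWellFounded W)
    (htot : ∀ w₁ w₂ : List C, PrefComparable W w₁ w₂) (v : A.V)
    (h : ∃ w, Wins A W v w) : List C :=
  (exists_minDebt A W hwf htot v h).choose

lemma minDebt_wins (A : Arena C) (W : Set (ℕ → C)) (hwf : PrefWellFounded W)
    (htot : ∀ w₁ w₂ : List C, PrefComparable W w₁ w₂) (v : A.V)
    (h : ∃ w, Wins A W v w) : Wins A W v (minDebt A W hwf htot v h) :=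
  (exists_minDebt A W hwf htot v h).choose_spec.1

lemma minDebt_min (A : Arena C) (W : Set (ℕ → C)) (hwf : PrefWellFounded W)
    (htot : ∀ w₁ w₂ : List C, PrefComparable W w₁ w₂) (v : A.V)
    (h : ∃ w, Wins A W v w) :
    ∀ w, Wins A W v w → prefLe W (minDebt A W hwf htot v h) w :=
  (exists_minDebt A W hwf htot v h).choose_spec.2

variable [Nonempty C]

open scoped Classical in
noncomputable def theNxt (A : Arena C) (W : Set (ℕ → C)) (hwf : PrefWellFounded W)
    (htot : ∀ w₁ w₂ : List C, PrefComparable W w₁ w₂) (x : A.V) : A.V × C × A.V :=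
  if h1 : A.P1 x then
    if hd : Dies A x then (dies_descent_p1 hd h1).choose
    else if hw : ∃ w, Wins A W x w then
      (minDebt_wins A W hwf htot x hw).choose.next x []
    else (A.succ x h1).choose
  else (x, Classical.arbitrary C, x)

lemma theNxt_p1_dies {A : Arena C} {W : Set (ℕ → C)} {hwf : PrefWellFounded W}
    {htot : ∀ w₁ w₂ : List C, PrefComparable W w₁ w₂} {x : A.V}
    (h1 : A.P1 x) (hd : Dies A x) :
    theNxt A W hwf htot x ∈ A.E ∧ (theNxt A W hwf htot x).1 = x ∧
      Dies A (theNxt A W hwf htot x).2.2 ∧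
      dRank A (theNxt A W hwf htot x).2.2 < dRank A x := by
  unfold theNxt
  rw [dif_pos h1, dif_pos hd]
  exact (dies_descent_p1 hd h1).choose_spec

lemma theNxt_p1_win {A : Arena C} {W : Set (ℕ → C)} {hwf : PrefWellFounded W}
    {htot : ∀ w₁ w₂ : List C, PrefComparable W w₁ w₂} {x : A.V}
    (h1 : A.P1 x) (hnd : ¬ Dies A x) (hw : ∃ w, Wins A W x w) :
    theNxt A W hwf htot x = (minDebt_wins A W hwf htot x hw).choose.next x [] := by
  unfold theNxt
  rw [dif_pos h1, dif_neg hnd, dif_pos hw]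

lemma theNxt_legal {A : Arena C} {W : Set (ℕ → C)} {hwf : PrefWellFounded W}
    {htot : ∀ w₁ w₂ : List C, PrefComparable W w₁ w₂} {x : A.V} (h1 : A.P1 x) :
    theNxt A W hwf htot x ∈ A.E ∧ (theNxt A W hwf htot x).1 = x := by
  unfold theNxt
  rw [dif_pos h1]
  by_cases hd : Dies A x
  · rw [dif_pos hd]
    obtain ⟨a, b, _⟩ := (dies_descent_p1 hd h1).choose_spec
    exact ⟨a, b⟩
  · rw [dif_neg hd]
    by_cases hw : ∃ w, Wins A W x w
    · rw [dif_pos hw]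
      have := (minDebt_wins A W hwf htot x hw).choose.legal x [] trivial h1
      exact this
    · rw [dif_neg hw]
      exact (A.succ x h1).choose_spec

noncomputable def memStrat (A : Arena C) (W : Set (ℕ → C)) (hwf : PrefWellFounded W)
    (htot : ∀ w₁ w₂ : List C, PrefComparable W w₁ w₂) : A.Strategy :=
  ⟨fun v l => theNxt A W hwf htot (A.endFrom v l),
   fun v l _ hp1 => theNxt_legal hp1⟩

lemma suffices_of_total (W : Set (ℕ → C))
    (hsafe : ∃ A : Set (List C), W = SafeObj A)
    (hwf : PrefWellFounded W)
    (htot : ∀ w₁ w₂ : List C, PrefComparable W w₁ w₂) :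
    SufficesIn (trivMem C) W (fun _ => True) := by
  obtain ⟨A₀, hA⟩ := hsafe
  intro A _
  refine ⟨memStrat A W hwf htot, ⟨fun x _ => theNxt A W hwf htot x, fun v l _ _ => rfl⟩, ?_⟩
  intro v hv π hplay hcons
  have hwin0 : Wins A W v [] := by
    obtain ⟨σ', h⟩ := hv
    exact ⟨σ', by rw [contAfter_nil]; exact h⟩
  have hnxt : ∀ n, A.P1 (π n).1 → π n = theNxt A W hwf htot (π n).1 := by
    intro n hp
    have h := hcons n (by rw [endFrom_play hplay n]; exact hp)
    rw [show (memStrat A W hwf htot).next v (List.ofFn fun i : Fin n => π i) =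
      theNxt A W hwf htot (A.endFrom v (List.ofFn fun i : Fin n => π i)) from rfl,
      endFrom_play hplay n] at h
    exact h
  -- no vertex along the play can force all plays to be finite
  have hnd : ∀ n, ¬ Dies A (π n).1 := by
    intro n hD
    have step : ∀ k, Dies A (π (n + k)).1 →
        Dies A (π (n + k + 1)).1 ∧ dRank A (π (n + k + 1)).1 < dRank A (π (n + k)).1 := by
      intro k hk
      have h12 : (π (n + k)).2.2 = (π (n + k + 1)).1 := (hplay.2 (n + k)).2
      by_cases hp : A.P1 (π (n + k)).1
      · have he := hnxt (n + k) hp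
        obtain ⟨hE, hs, hd2, hr⟩ := theNxt_p1_dies (W := W) (hwf := hwf) (htot := htot) hp hk
        rw [← he, h12] at hd2 hr
        exact ⟨hd2, hr⟩
      · have := dies_descent_p2 hk hp (π (n + k)) (hplay.2 (n + k)).1 rfl
        rw [h12] at this
        exact this
    have hDall : ∀ k, Dies A (π (n + k)).1 := by
      intro k
      induction k with
      | zero => exact hD
      | succ k ih => exact (step k ih).1
    exact no_ordinal_descent (fun k => dRank A (π (n + k)).1) (fun k => (step k (hDall k)).2)
  -- invariant: Player 1 wins from the current vertex with the colors seen so far as debt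
  have hWin : ∀ n, Wins A W (π n).1 (List.ofFn fun i : Fin n => Arena.playCol π i) := by
    intro n
    induction n with
    | zero =>
      simp only [List.ofFn_zero]
      rw [hplay.1]
      exact hwin0
    | succ n ih =>
      rw [ofFn_snoc (Arena.playCol π) n]
      have h12 : (π n).2.2 = (π (n + 1)).1 := (hplay.2 n).2
      by_cases hp : A.P1 (π n).1
      · have hw : ∃ w, Wins A W (π n).1 w := ⟨_, ih⟩
        have he := hnxt n hp
        rw [theNxt_p1_win hp (hnd n) hw] at he
        have hstep : Wins A W (π n).2.2
            (minDebt A W hwf htot (π n).1 hw ++ [(π n).2.1]) :=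
          wins_step (minDebt_wins A W hwf htot (π n).1 hw) (π n) (hplay.2 n).1 rfl
            (fun _ => he)
        have hle := minDebt_min A W hwf htot (π n).1 hw _ ih
        have := wins_mono (prefLe_snoc (π n).2.1 hle) hstep
        rw [h12] at this
        exact this
      · have hstep := wins_step ih (π n) (hplay.2 n).1 rfl (fun hP => absurd hP hp)
        rw [h12] at hstep
        exact hstep
  -- conclude safety
  rw [hA]
  intro hR
  obtain ⟨m, hm⟩ := hR
  have hempty : contAfter W (List.ofFn fun i : Fin m => Arena.playCol π i) = ∅ := by
    ext y
    simp only [Set.mem_empty_iff_false, iff_false]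
    intro hy
    rw [hA] at hy
    exact hy ⟨(List.ofFn fun i : Fin m => Arena.playCol π i).length,
      by rw [ofFn_take_wcat]; exact hm⟩
  obtain ⟨σw, hσw⟩ := hWin m
  rw [hempty] at hσw
  obtain ⟨π', hplay', hcons'⟩ := not_dies_exists_play (hnd m) σw
  exact absurd (hσw π' hplay' hcons') (Set.notMem_empty _)

end Backward

section Forward

/-- Vertices of the gadget arena. -/
inductive GV where
  | pre (b : Bool) (n : ℕ)
  | mid
  | post (b : Bool) (n : ℕ)

variable {C : Type}

def gTgt (w : Bool → List C) (b : Bool) (k : ℕ) : GV :=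
  if k + 1 = (w b).length then .mid else .pre b (k + 1)

def gE (w : Bool → List C) (x : Bool → ℕ → C) (c₀ : C) : Set (GV × C × GV) :=
  {e | (∃ b k, k < (w b).length ∧ e = (.pre b k, (w b).getD k c₀, gTgt w b k)) ∨
       (∃ b, e = (.mid, x b 0, .post b 1)) ∨
       (∃ b n, 1 ≤ n ∧ e = (.post b n, x b n, .post b (n + 1))) ∨
       (∃ b k, ¬ k < (w b).length ∧ e = (.pre b k, c₀, .pre b k)) ∨
       (∃ b, e = (.post b 0, c₀, .post b 0))}

def gadget (w : Bool → List C) (x : Bool → ℕ → C) (c₀ : C) : Arena C where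
  V := GV
  P1 := fun _ => True
  E := gE w x c₀
  succ := by
    rintro (⟨b, k⟩ | _ | ⟨b, n⟩) _
    · by_cases h : k < (w b).length
      · exact ⟨(.pre b k, (w b).getD k c₀, gTgt w b k), Or.inl ⟨b, k, h, rfl⟩, rfl⟩
      · exact ⟨(.pre b k, c₀, .pre b k), Or.inr (Or.inr (Or.inr (Or.inl ⟨b, k, h, rfl⟩))), rfl⟩
    · exact ⟨(.mid, x true 0, .post true 1), Or.inr (Or.inl ⟨true, rfl⟩), rfl⟩
    · match n with
      | 0 => exact ⟨(.post b 0, c₀, .post b 0), Or.inr (Or.inr (Or.inr (Or.inr ⟨b, rfl⟩))), rfl⟩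
      | (n + 1) => exact ⟨(.post b (n + 1), x b (n + 1), .post b (n + 2)),
          Or.inr (Or.inr (Or.inl ⟨b, n + 1, by omega, rfl⟩)), rfl⟩

lemma gE_from_pre {w : Bool → List C} {x : Bool → ℕ → C} {c₀ : C} {e : GV × C × GV}
    (h : e ∈ gE w x c₀) {b : Bool} {k : ℕ} (hsrc : e.1 = .pre b k) (hk : k < (w b).length) :
    e = (.pre b k, (w b).getD k c₀, gTgt w b k) := by
  rcases h with ⟨b', k', hk', he⟩ | ⟨b', he⟩ | ⟨b', n', hn', he⟩ | ⟨b', k', hk', he⟩ | ⟨b', he⟩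
  · subst he
    obtain ⟨rfl, rfl⟩ : b' = b ∧ k' = k := by simpa using hsrc
    rfl
  · subst he; simp at hsrc
  · subst he; simp at hsrc
  · subst he
    obtain ⟨rfl, rfl⟩ : b' = b ∧ k' = k := by simpa using hsrc
    exact absurd hk hk'
  · subst he; simp at hsrc

lemma gE_from_mid {w : Bool → List C} {x : Bool → ℕ → C} {c₀ : C} {e : GV × C × GV}
    (h : e ∈ gE w x c₀) (hsrc : e.1 = .mid) :
    ∃ b, e = (.mid, x b 0, .post b 1) := by
  rcases h with ⟨b', k', hk', he⟩ | ⟨b', he⟩ | ⟨b', n', hn', he⟩ | ⟨b', k', hk', he⟩ | ⟨b', he⟩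
  · subst he; simp at hsrc
  · subst he; exact ⟨b', rfl⟩
  · subst he; simp at hsrc
  · subst he; simp at hsrc
  · subst he; simp at hsrc

lemma gE_from_post {w : Bool → List C} {x : Bool → ℕ → C} {c₀ : C} {e : GV × C × GV}
    (h : e ∈ gE w x c₀) {b : Bool} {n : ℕ} (hsrc : e.1 = .post b n) (hn : 1 ≤ n) :
    e = (.post b n, x b n, .post b (n + 1)) := by
  rcases h with ⟨b', k', hk', he⟩ | ⟨b', he⟩ | ⟨b', n', hn', he⟩ | ⟨b', k', hk', he⟩ | ⟨b', he⟩
  · subst he; simp at hsrc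
  · subst he; simp at hsrc
  · subst he
    obtain ⟨rfl, rfl⟩ : b' = b ∧ n' = n := by simpa using hsrc
    rfl
  · subst he; simp at hsrc
  · subst he
    obtain ⟨rfl, h0⟩ : b' = b ∧ 0 = n := by simpa using hsrc
    exact absurd hn (by omega)

def gPos (w : Bool → List C) (b : Bool) (k : ℕ) : GV :=
  if k < (w b).length then .pre b k else .mid

lemma gadget_shape {w : Bool → List C} {x : Bool → ℕ → C} {c₀ : C} {b : Bool}
    {π : ℕ → GV × C × GV} (hplay : (gadget w x c₀).PlayFrom (gPos w b 0) π) :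
    ∃ β, π (w b).length = (.mid, x β 0, .post β 1) ∧
      Arena.playCol π = wcat (w b) (x β) := by
  have h2 := hplay.2
  set L := (w b).length with hL
  have c1 : ∀ k, k ≤ L → (π k).1 = (if k < L then GV.pre b k else GV.mid) := by
    intro k hk
    induction k with
    | zero =>
      rw [hplay.1]
      rfl
    | succ k ih =>
      have hk' : k < L := by omega
      have hπk := gE_from_pre (h2 k).1
        (by rw [ih (le_of_lt hk'), if_pos hk']) hk'
      have hnx : (π (k + 1)).1 = (π k).2.2 := ((h2 k).2).symm
      rw [hnx, hπk]
      show gTgt w b k = _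
      unfold gTgt
      by_cases h : k + 1 = L
      · rw [if_pos h, if_neg (by omega)]
      · rw [if_neg h, if_pos (by omega)]
  have hmid : (π L).1 = .mid := by rw [c1 L le_rfl]; simp
  obtain ⟨β, hβ⟩ := gE_from_mid (h2 L).1 hmid
  have c2 : ∀ j, π (L + 1 + j) = (.post β (j + 1), x β (j + 1), .post β (j + 2)) := by
    intro j
    induction j with
    | zero =>
      have : (π (L + 1)).1 = GV.post β 1 := by
        rw [← (h2 L).2, hβ]
      exact gE_from_post (h2 (L + 1)).1 this (by omega)
    | succ j ih =>
      have : (π (L + 1 + j + 1)).1 = GV.post β (j + 2) := by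
        rw [← (h2 (L + 1 + j)).2, ih]
      exact gE_from_post (h2 (L + 1 + j + 1)).1 this (by omega)
  have c1' : ∀ k, k < L → π k = (.pre b k, (w b).getD k c₀, gTgt w b k) := by
    intro k hk
    exact gE_from_pre (h2 k).1 (by rw [c1 k (le_of_lt hk), if_pos hk]) hk
  refine ⟨β, hβ, ?_⟩
  funext n
  show (π n).2.1 = wcat (w b) (x β) n
  rcases lt_trichotomy n L with h | h | h
  · rw [c1' n h]
    have h' : n < (w b).length := by omega
    simp only [wcat]
    rw [dif_pos h']
    simp [List.getD, List.getElem?_eq_getElem h', List.get_eq_getElem]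
  · subst h
    rw [hβ]
    have h' : ¬ (L < (w b).length) := by omega
    simp only [wcat]
    rw [dif_neg h']
    rw [show L - (w b).length = 0 from by omega]
  · obtain ⟨j, rfl⟩ : ∃ j, n = L + 1 + j := ⟨n - L - 1, by omega⟩
    rw [c2 j]
    have h' : ¬ (L + 1 + j < (w b).length) := by omega
    simp only [wcat]
    rw [dif_neg h']
    rw [show L + 1 + j - (w b).length = j + 1 from by omega]

def gStep (w : Bool → List C) (x : Bool → ℕ → C) (c₀ : C) (β : Bool) : GV → GV × C × GV :=
  fun v => match v with
  | .pre b k => if k < (w b).length then (.pre b k, (w b).getD k c₀, gTgt w b k)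
      else (.pre b k, c₀, .pre b k)
  | .mid => (.mid, x β 0, .post β 1)
  | .post b n => if n = 0 then (.post b n, c₀, .post b n)
      else (.post b n, x b n, .post b (n + 1))

lemma gStep_legal (w : Bool → List C) (x : Bool → ℕ → C) (c₀ : C) (β : Bool) (v : GV) :
    gStep w x c₀ β v ∈ gE w x c₀ ∧ (gStep w x c₀ β v).1 = v := by
  match v with
  | .pre b k =>
    by_cases h : k < (w b).length
    · simp only [gStep, if_pos h]
      exact ⟨Or.inl ⟨b, k, h, rfl⟩, trivial⟩
    · simp only [gStep, if_neg h]
      exact ⟨Or.inr (Or.inr (Or.inr (Or.inl ⟨b, k, h, rfl⟩))), trivial⟩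
  | .mid => exact ⟨Or.inr (Or.inl ⟨β, rfl⟩), rfl⟩
  | .post b n =>
    by_cases h : n = 0
    · subst h
      constructor
      · exact Or.inr (Or.inr (Or.inr (Or.inr ⟨b, by simp [gStep]⟩)))
      · simp [gStep]
    · simp only [gStep, if_neg h]
      exact ⟨Or.inr (Or.inr (Or.inl ⟨b, n, by omega, rfl⟩)), trivial⟩

def gStrat (w : Bool → List C) (x : Bool → ℕ → C) (c₀ : C) (β : Bool) :
    (gadget w x c₀).Strategy :=
  ⟨fun v l => gStep w x c₀ β ((gadget w x c₀).endFrom v l),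
   fun v l _ _ => gStep_legal w x c₀ β _⟩

lemma gStrat_winning (w : Bool → List C) (x : Bool → ℕ → C) (c₀ : C) (W : Set (ℕ → C))
    (b : Bool) (hb : x b ∈ contAfter W (w b)) :
    (gStrat w x c₀ b).WinningFrom W (gPos w b 0) := by
  intro π hplay hcons
  obtain ⟨β, hmid, hcol⟩ := gadget_shape hplay
  have hc := hcons (w b).length trivial
  rw [show (gStrat w x c₀ b).next (gPos w b 0) (List.ofFn fun i : Fin (w b).length => π i) =
    gStep w x c₀ b ((gadget w x c₀).endFrom (gPos w b 0)
      (List.ofFn fun i : Fin (w b).length => π i)) from rfl,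
    endFrom_play hplay] at hc
  have hmid1 : (π (w b).length).1 = GV.mid := by rw [hmid]
  rw [hmid1] at hc
  rw [hmid] at hc
  have hβ : β = b := by
    have h22 := congrArg (fun e : GV × C × GV => e.2.2) hc
    simp only [gStep] at h22
    injection h22 with h1 h2
  rw [show Arena.playCol π = wcat (w b) (x β) from hcol, hβ]
  exact hb

end Forward

lemma total_of_suffices {C : Type} [Nonempty C] (W : Set (ℕ → C))
    (hsuff : SufficesIn (trivMem C) W (fun _ => True)) :
    ∀ w₁ w₂ : List C, PrefComparable W w₁ w₂ := by
  by_contra hc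
  push_neg at hc
  obtain ⟨w₁, w₂, hcomp⟩ := hc
  rw [PrefComparable, not_or] at hcomp
  obtain ⟨h12, h21⟩ := hcomp
  obtain ⟨x₁, hx₁, hx₁'⟩ := Set.not_subset.mp h12
  obtain ⟨x₂, hx₂, hx₂'⟩ := Set.not_subset.mp h21
  set w : Bool → List C := fun b => bif b then w₁ else w₂ with hw
  set x : Bool → ℕ → C := fun b => bif b then x₁ else x₂ with hx
  set c₀ : C := Classical.arbitrary C with hc₀
  obtain ⟨σ, ⟨nxt, hbased⟩, hopt⟩ := hsuff (gadget w x c₀) trivial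
  have hwin : ∀ b, σ.WinningFrom W (gPos w b 0) := by
    intro b
    refine hopt _ ⟨gStrat w x c₀ b, gStrat_winning w x c₀ W b ?_⟩
    cases b
    · exact hx₂
    · exact hx₁
  have hex : ∀ b : Bool, ∃ π, (gadget w x c₀).PlayFrom (gPos w b 0) π ∧
      σ.Consistent (gPos w b 0) π := by
    intro b
    obtain ⟨π, h1, h2, _⟩ := exists_play σ (gPos w b 0) (fun _ => True) (σ.next (gPos w b 0))
      trivial
      (fun l _ hh => ⟨(σ.legal _ l hh trivial).1, (σ.legal _ l hh trivial).2, trivial⟩)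
      (fun l _ _ _ => rfl)
    exact ⟨π, h1, h2⟩
  obtain ⟨πt, hpt, hct⟩ := hex true
  obtain ⟨πf, hpf, hcf⟩ := hex false
  obtain ⟨βt, hmt, hcolt⟩ := gadget_shape hpt
  obtain ⟨βf, hmf, hcolf⟩ := gadget_shape hpf
  -- both plays make the same choice at the merge vertex `mid`
  have hpin : ∀ (b : Bool) (π : ℕ → GV × C × GV),
      (gadget w x c₀).PlayFrom (gPos w b 0) π → σ.Consistent (gPos w b 0) π →
      (π (w b).length).1 = GV.mid →
      π (w b).length = nxt GV.mid () := by
    intro b π hp hcons hm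
    have h1 := hcons (w b).length trivial
    have h2 := hbased (gPos w b 0) (List.ofFn fun i : Fin (w b).length => π i)
      (histFrom_play hp _) trivial
    rw [h2] at h1
    rw [endFrom_play hp, hm] at h1
    exact h1
  have heq : πt (w true).length = πf (w false).length := by
    rw [hpin true πt hpt hct (by rw [hmt]), hpin false πf hpf hcf (by rw [hmf])]
  rw [hmt, hmf] at heq
  have hββ : βt = βf := by
    have := congrArg (fun e : GV × C × GV => e.2.2) heq
    injection this with hh _
  have hwt := hwin true πt hpt hct
  have hwf' := hwin false πf hpf hcf
  rw [show Arena.playCol πt = wcat (w true) (x βt) from hcolt] at hwt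
  rw [show Arena.playCol πf = wcat (w false) (x βf) from hcolf] at hwf'
  -- wcat w₁ (x βt) ∈ W and wcat w₂ (x βt) ∈ W
  rw [hββ] at hwt
  cases hβ : βf
  · rw [hβ] at hwt hwf'
    exact hx₂' hwt
  · rw [hβ] at hwt hwf'
    exact hx₁' hwf'

/-- for a general safety objective with well-founded prefix preorder,
memoryless strategies suffice (the trivial memory structure suffices in all arenas)
iff the prefix preorder is total. -/
theorem memoryless_iff_total {C : Type} [Nonempty C]
    (W : Set (ℕ → C))
    (hsafe : ∃ A : Set (List C), W = SafeObj A)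
    (hwf : PrefWellFounded W) :
    SufficesIn (trivMem C) W (fun _ => True) ↔
      ∀ w₁ w₂ : List C, PrefComparable W w₁ w₂ := by
  constructor
  · exact fun h => total_of_suffices W h
  · exact fun h => suffices_of_total W hsafe hwf h

end RegularMemory
end

section
/- Let W ⊆ C^ω be an objective whose prefix preorder ⪯_W is not well-founded, i.e., there exists an infinite sequence of finite words w₁ ≻_W w₂ ≻_W w₃ ≻_W ⋯ that is strictly decreasing for ⪯_W. Then no memory structure with finitely many states suffices to play optimally for W in all arenas: for every finite memory structure M there is an arena A in which Player 1 has a winning strategy from some vertex but no optimal strategy based on M. -/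
set_option autoImplicit false

namespace RegularMemory

section NoFinMemAux

variable {C : Type} [Nonempty C]

/-- Vertex type for the counterexample arena. `none` is the Player-1 vertex `u`;
`some (false, k, t)` are branch vertices, `some (true, l, t)` are lane vertices. -/
abbrev AV : Type := Option (Bool × ℕ × ℕ)

def uV : AV := none
def bV (k t : ℕ) : AV := some (false, k, t)
def lV (l t : ℕ) : AV := some (true, l, t)

variable (g : ℕ → List C) (x : ℕ → ℕ → C)

def vtx (k t : ℕ) : AV := if t < (g k).length then bV k t else uV

def edg : Set (AV × C × AV) :=
  {e | (∃ k t, ∃ h : t < (g k).length,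
          e = (vtx g k t, (g k).get ⟨t, h⟩, vtx g k (t + 1)))
     ∨ (∃ l, e = (uV, x l 0, lV l 1))
     ∨ (∃ l t, 1 ≤ t ∧ e = (lV l t, x l t, lV l (t + 1)))}

def cexArena : Arena C where
  V := AV
  P1 v := v = uV
  E := edg g x
  succ _v hv := ⟨(uV, x 0 0, lV 0 1), Or.inr (Or.inl ⟨0, rfl⟩), by rw [hv]⟩

/-- The expected play: follow branch `k`, then lane `j`. -/
noncomputable def expPlay (k j : ℕ) (n : ℕ) : AV × C × AV :=
  if h : n < (g k).length then (vtx g k n, (g k).get ⟨n, h⟩, vtx g k (n + 1))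
  else if n = (g k).length then (uV, x j 0, lV j 1)
  else (lV j (n - (g k).length), x j (n - (g k).length), lV j (n - (g k).length + 1))

def curV (k j n : ℕ) : AV := if n ≤ (g k).length then vtx g k n else lV j (n - (g k).length)

theorem expPlay_lt {k j n : ℕ} (h : n < (g k).length) :
    expPlay g x k j n = (vtx g k n, (g k).get ⟨n, h⟩, vtx g k (n + 1)) := dif_pos h

theorem expPlay_eq {k j : ℕ} :
    expPlay g x k j (g k).length = (uV, x j 0, lV j 1) := by
  rw [expPlay, dif_neg (lt_irrefl _), if_pos rfl]

theorem expPlay_gt {k j n : ℕ} (h : (g k).length < n) :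
    expPlay g x k j n
      = (lV j (n - (g k).length), x j (n - (g k).length), lV j (n - (g k).length + 1)) := by
  rw [expPlay, dif_neg (by omega), if_neg (by omega)]

theorem expPlay_mem (k j n : ℕ) : expPlay g x k j n ∈ edg g x := by
  rcases lt_trichotomy n (g k).length with h | h | h
  · rw [expPlay_lt g x h]; exact Or.inl ⟨k, n, h, rfl⟩
  · subst h; rw [expPlay_eq]; exact Or.inr (Or.inl ⟨j, rfl⟩)
  · rw [expPlay_gt g x h]; exact Or.inr (Or.inr ⟨j, n - (g k).length, by omega, rfl⟩)

theorem expPlay_src (k j n : ℕ) : (expPlay g x k j n).1 = curV g k j n := by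
  rcases lt_trichotomy n (g k).length with h | h | h
  · rw [expPlay_lt g x h, curV, if_pos (le_of_lt h)]
  · subst h; rw [expPlay_eq, curV, if_pos (le_refl _), vtx, if_neg (lt_irrefl _)]
  · rw [expPlay_gt g x h, curV, if_neg (by omega)]

theorem expPlay_tgt (k j n : ℕ) : (expPlay g x k j n).2.2 = curV g k j (n + 1) := by
  rcases lt_trichotomy n (g k).length with h | h | h
  · rw [expPlay_lt g x h, curV, if_pos (by omega)]
  · subst h
    have h1 : (g k).length + 1 - (g k).length = 1 := by omega
    rw [expPlay_eq, curV, if_neg (by omega), h1]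
  · have h1 : n + 1 - (g k).length = n - (g k).length + 1 := by omega
    rw [expPlay_gt g x h, curV, if_neg (by omega), h1]

theorem expPlay_play (k j : ℕ) :
    (cexArena g x).PlayFrom (vtx g k 0) (expPlay g x k j) := by
  refine ⟨?_, fun n => ⟨expPlay_mem g x k j n, ?_⟩⟩
  · rw [expPlay_src g x k j 0, curV, if_pos (Nat.zero_le _)]
  · rw [expPlay_tgt g x k j n, expPlay_src g x k j (n + 1)]

theorem expPlay_col (k j : ℕ) :
    Arena.playCol (expPlay g x k j) = wcat (g k) (x j) := by
  funext n
  rcases lt_trichotomy n (g k).length with h | h | h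
  · rw [Arena.playCol, expPlay_lt g x h, wcat]; simp [h]
  · subst h; rw [Arena.playCol, expPlay_eq, wcat]; simp
  · rw [Arena.playCol, expPlay_gt g x h, wcat]
    simp [show ¬ n < (g k).length by omega]

theorem curV_eq_u {k j n : ℕ} : curV g k j n = uV ↔ n = (g k).length := by
  rw [curV]
  split_ifs with h
  · rw [vtx]
    split_ifs with h'
    · simp only [bV, uV]
      constructor
      · intro hc; exact absurd hc (by simp)
      · omega
    · constructor
      · intro _; omega
      · intro _; rfl
  · simp only [lV, uV]
    constructor
    · intro hc; exact absurd hc (by simp)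
    · omega

theorem edge_from_b {k t : ℕ} {e : AV × C × AV} (he : e ∈ edg g x) (hsrc : e.1 = bV k t) :
    ∃ h : t < (g k).length, e = (bV k t, (g k).get ⟨t, h⟩, vtx g k (t + 1)) := by
  rcases he with ⟨k', t', h', rfl⟩ | ⟨l', rfl⟩ | ⟨l', t', ht', rfl⟩
  · simp only [vtx, if_pos h'] at hsrc
    simp only [bV, Option.some_inj, Prod.mk.injEq] at hsrc
    obtain ⟨-, rfl, rfl⟩ := hsrc
    exact ⟨h', by simp only [vtx, if_pos h']⟩
  · exact absurd hsrc.symm (by simp [bV, uV])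
  · exact absurd hsrc (by simp [bV, lV])

theorem edge_from_l {l t : ℕ} {e : AV × C × AV} (he : e ∈ edg g x) (hsrc : e.1 = lV l t) :
    e = (lV l t, x l t, lV l (t + 1)) := by
  rcases he with ⟨k', t', h', rfl⟩ | ⟨l', rfl⟩ | ⟨l', t', ht', rfl⟩
  · rw [vtx, if_pos h'] at hsrc; exact absurd hsrc (by simp [bV, lV])
  · exact absurd hsrc.symm (by simp [lV, uV])
  · simp only [lV, Option.some_inj, Prod.mk.injEq] at hsrc
    obtain ⟨-, rfl, rfl⟩ := hsrc
    rfl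

theorem edge_from_u {e : AV × C × AV} (he : e ∈ edg g x) (hsrc : e.1 = uV) :
    ∃ l, e = (uV, x l 0, lV l 1) := by
  rcases he with ⟨k', t', h', rfl⟩ | ⟨l', rfl⟩ | ⟨l', t', ht', rfl⟩
  · rw [vtx, if_pos h'] at hsrc; exact absurd hsrc (by simp [bV, uV])
  · exact ⟨l', rfl⟩
  · exact absurd hsrc (by simp [lV, uV])

/-- Generic lemma: a linked sequence of edges gives valid histories. -/
theorem hist_ofFn {A : Arena C} (n : ℕ) :
    ∀ (π : ℕ → A.V × C × A.V) (v : A.V), (π 0).1 = v →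
    (∀ m, π m ∈ A.E) → (∀ m, (π m).2.2 = (π (m + 1)).1) →
    A.HistFrom v (List.ofFn fun i : Fin n => π i) := by
  induction n with
  | zero => intro π v _ _ _; rw [List.ofFn_zero]; trivial
  | succ n ih =>
    intro π v h0 hmem hlink
    rw [List.ofFn_succ]
    refine ⟨hmem 0, h0, ?_⟩
    have := ih (fun m => π (m + 1)) (π 0).2.2 (hlink 0).symm (fun m => hmem (m + 1))
      (fun m => hlink (m + 1))
    simpa using this

theorem endFrom_ofFn {A : Arena C} (n : ℕ) :
    ∀ (π : ℕ → A.V × C × A.V) (v : A.V), (π 0).1 = v →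
    (∀ m, (π m).2.2 = (π (m + 1)).1) →
    A.endFrom v (List.ofFn fun i : Fin (n + 1) => π i) = (π n).2.2 := by
  induction n with
  | zero =>
    intro π v _ _
    simp [Arena.endFrom, List.ofFn_succ]
  | succ n ih =>
    intro π v h0 hlink
    rw [List.ofFn_succ]
    show A.endFrom (π 0).2.2 _ = _
    have := ih (fun m => π (m + 1)) (π 0).2.2 (hlink 0).symm (fun m => hlink (m + 1))
    simpa using this

theorem endFrom_exp (k j n : ℕ) :
    (cexArena g x).endFrom (vtx g k 0) (List.ofFn fun i : Fin n => expPlay g x k j i)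
      = curV g k j n := by
  cases n with
  | zero =>
    erw [List.ofFn_zero]
    show vtx g k 0 = curV g k j 0
    rw [curV, if_pos (Nat.zero_le _)]
  | succ n =>
    erw [endFrom_ofFn (A := cexArena g x) n _ _ ((expPlay_play g x k j).1)
      (fun m => ((expPlay_play g x k j).2 m).2)]
    exact expPlay_tgt g x k j n

theorem hist_exp (k j n : ℕ) :
    (cexArena g x).HistFrom (vtx g k 0) (List.ofFn fun i : Fin n => expPlay g x k j i) :=
  hist_ofFn n _ _ ((expPlay_play g x k j).1) (fun m => ((expPlay_play g x k j).2 m).1)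
    (fun m => ((expPlay_play g x k j).2 m).2)

theorem cols_exp (k j : ℕ) :
    ((List.ofFn fun i : Fin (g k).length => expPlay g x k j i).map fun e => e.2.1)
      = g k := by
  rw [List.map_ofFn]
  have h1 : ((fun e : AV × C × AV => e.2.1) ∘ fun i : Fin (g k).length => expPlay g x k j i)
      = fun i : Fin (g k).length => (g k).get i := by
    funext i
    simp only [Function.comp]
    rw [expPlay_lt g x i.isLt]
  rw [h1, List.ofFn_get]

/-- The forced-play lemma: a consistent play which meets the strategy's choice at `u`
equals the expected play. -/
theorem forced_play (k j : ℕ) (σ : (cexArena g x).Strategy)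
    (hσ : σ.next (vtx g k 0) (List.ofFn fun i : Fin (g k).length => expPlay g x k j i)
          = (uV, x j 0, lV j 1))
    (π : ℕ → AV × C × AV)
    (hplay : (cexArena g x).PlayFrom (vtx g k 0) π)
    (hcons : σ.Consistent (vtx g k 0) π) :
    ∀ n, π n = expPlay g x k j n := by
  intro n
  induction n using Nat.strong_induction_on with
  | _ n ih =>
    have hofn : (List.ofFn fun i : Fin n => π i)
        = List.ofFn fun i : Fin n => expPlay g x k j i :=
      congrArg List.ofFn (funext fun i => ih i i.isLt)
    have hsrc : (π n).1 = curV g k j n := by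
      cases n with
      | zero =>
        rw [hplay.1, curV, if_pos (Nat.zero_le _)]
      | succ m =>
        rw [← (hplay.2 m).2, ih m (by omega), expPlay_tgt g x k j m]
    rcases lt_trichotomy n (g k).length with h | h | h
    · have hb : (π n).1 = bV k n := by
        rw [hsrc, curV, if_pos (le_of_lt h), vtx, if_pos h]
      obtain ⟨h', hπ⟩ := edge_from_b g x (hplay.2 n).1 hb
      have hv : vtx g k n = bV k n := by rw [vtx]; exact if_pos h
      rw [hπ, expPlay_lt g x h, hv]
    · subst h
      have hP1 : (cexArena g x).P1
          ((cexArena g x).endFrom (vtx g k 0)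
            (List.ofFn fun i : Fin (g k).length => π i)) := by
        show _ = uV
        erw [hofn, endFrom_exp, curV_eq_u]
      erw [hcons _ hP1, hofn, hσ, expPlay_eq]
    · have hb : (π n).1 = lV j (n - (g k).length) := by
        rw [hsrc, curV, if_neg (by omega)]
      rw [edge_from_l g x (hplay.2 n).1 hb, expPlay_gt g x h]

/-- The winning strategy for branch `k`: always go to lane `k`. -/
def winStrat (k : ℕ) : (cexArena g x).Strategy where
  next _ _ := (uV, x k 0, lV k 1)
  legal _v _l _h hP1 := ⟨Or.inr (Or.inl ⟨k, rfl⟩), hP1.symm⟩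

theorem winStrat_winning {W : Set (ℕ → C)} (k : ℕ) (hx : x k ∈ contAfter W (g k)) :
    (winStrat g x k).WinningFrom W (vtx g k 0) := by
  intro π hplay hcons
  have hall : ∀ n, π n = expPlay g x k k n :=
    forced_play g x k k (winStrat g x k) rfl π hplay hcons
  have : Arena.playCol π = wcat (g k) (x k) := by
    rw [← expPlay_col g x k k]
    funext n
    rw [Arena.playCol, Arena.playCol, hall n]
  rw [this]
  exact hx

end NoFinMemAux

/-- if the prefix preorder of `W` is not well-founded (there is an
infinite strictly decreasing sequence of finite words), then no finite memory
structure suffices to play optimally for `W` in all arenas. -/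
theorem no_finite_memory_of_not_wellFounded {C : Type} [Nonempty C]
    (W : Set (ℕ → C))
    (f : ℕ → List C)
    (hdec : ∀ i : ℕ, prefLt W (f (i + 1)) (f i)) :
    ∀ N : MemStruct C, Finite N.M →
      ∃ A : Arena C,
        (∃ v : A.V, ∃ σ : A.Strategy, σ.WinningFrom W v) ∧
        ¬ ∃ σ : A.Strategy, σ.BasedOn N ∧ σ.Optimal W := by
  intro N hN
  have hd : ∀ l : ℕ, ∃ y, y ∈ contAfter W (f l) ∧ y ∉ contAfter W (f (l + 1)) := by
    intro l
    exact Set.not_subset.mp ((hdec l).2)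
  choose x hx₁ hx₂ using hd
  refine ⟨cexArena f x, ⟨vtx f 0 0, winStrat f x 0, winStrat_winning f x 0 (hx₁ 0)⟩, ?_⟩
  rintro ⟨σ, ⟨nxt, hbased⟩, hopt⟩
  have : Finite N.M := hN
  obtain ⟨m, hm⟩ := Finite.exists_infinite_fiber (fun k : ℕ => N.updStar N.init (f k))
  have hminf : ((fun k : ℕ => N.updStar N.init (f k)) ⁻¹' {m}).Infinite :=
    Set.infinite_coe_iff.mp hm
  obtain ⟨k₀, hk₀⟩ := hminf.nonempty
  have hP1u : ∀ k' j' : ℕ, (cexArena f x).P1 ((cexArena f x).endFrom (vtx f k' 0)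
      (List.ofFn fun i : Fin (f k').length => expPlay f x k' j' i)) := by
    intro k' j'
    show _ = uV
    rw [endFrom_exp, curV_eq_u]
  have hkey : ∀ k' ∈ (fun k : ℕ => N.updStar N.init (f k)) ⁻¹' {m}, ∀ j' : ℕ,
      σ.next (vtx f k' 0) (List.ofFn fun i : Fin (f k').length => expPlay f x k' j' i)
        = nxt uV m := by
    intro k' hk' j'
    have hk'' : N.updStar N.init (f k') = m := hk'
    have he : (cexArena f x).endFrom (vtx f k' 0)
        (List.ofFn fun i : Fin (f k').length => expPlay f x k' j' i) = uV := hP1u k' j'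
    rw [hbased _ _ (hist_exp f x k' j' _) (hP1u k' j'), he]
    exact congrArg (nxt uV) ((congrArg (N.updStar N.init) (cols_exp f x k' j')).trans hk'')
  have hleg := σ.legal (vtx f k₀ 0)
    (List.ofFn fun i : Fin (f k₀).length => expPlay f x k₀ 0 i)
    (hist_exp f x k₀ 0 _) (hP1u k₀ 0)
  rw [hkey k₀ hk₀ 0] at hleg
  have hsrc : (nxt uV m).1 = uV := by rw [hleg.2]; exact hP1u k₀ 0
  obtain ⟨ℓ, hel⟩ := edge_from_u f x hleg.1 hsrc
  obtain ⟨k, hk, hkℓ⟩ := hminf.exists_gt ℓ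
  have hwin : σ.WinningFrom W (vtx f k 0) :=
    hopt _ ⟨winStrat f x k, winStrat_winning f x k (hx₁ k)⟩
  have hcons : σ.Consistent (vtx f k 0) (expPlay f x k ℓ) := by
    intro n hP1n
    have h' : (cexArena f x).endFrom (vtx f k 0)
        (List.ofFn fun i : Fin n => expPlay f x k ℓ i) = uV := hP1n
    rw [endFrom_exp] at h'
    have hn : n = (f k).length := (curV_eq_u f).mp h'
    subst hn
    rw [expPlay_eq, hkey k hk ℓ]
    exact hel.symm
  have hmem := hwin (expPlay f x k ℓ) (expPlay_play f x k ℓ) hcons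
  erw [expPlay_col] at hmem
  have hchain : ∀ i j : ℕ, i ≤ j → contAfter W (f j) ⊆ contAfter W (f i) := by
    intro i j hij
    induction j with
    | zero =>
      cases Nat.le_zero.mp hij
      exact subset_rfl
    | succ j ihj =>
      rcases Nat.lt_or_ge i (j + 1) with h | h
      · exact Set.Subset.trans ((hdec j).1) (ihj (by omega))
      · have hij' : i = j + 1 := by omega
        subst hij'
        exact subset_rfl
  have hxk : x ℓ ∈ contAfter W (f k) := hmem
  exact hx₂ ℓ (hchain (ℓ + 1) k hkℓ hxk)


end RegularMemory
end

section
/- Every general safety objective W ⊆ C^ω is M_triv-progress-consistent: for all finite words w₁, w₂ ∈ C^*, if w₁ ≺_W w₁w₂ then w₁(w₂)^ω ∈ W. -/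
set_option autoImplicit false

namespace RegularMemory

lemma wcat_append {C : Type} (u v : List C) (x : ℕ → C) :
    wcat (u ++ v) x = wcat u (wcat v x) := by
  funext n
  simp only [wcat, List.length_append, List.get_eq_getElem]
  by_cases h1 : n < u.length
  · have h2 : n < u.length + v.length := lt_of_lt_of_le h1 (Nat.le_add_right _ _)
    rw [dif_pos h2, dif_pos h1, List.getElem_append_left h1]
  · rw [dif_neg h1]
    by_cases h2 : n < u.length + v.length
    · have h3 : n - u.length < v.length := by omega
      rw [dif_pos h2, dif_pos h3, List.getElem_append_right (by omega)]
    · have h3 : ¬ n - u.length < v.length := by omega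
      rw [dif_neg h2, dif_neg h3, Nat.sub_sub]

lemma length_join_replicate {C : Type} (w : List C) (k : ℕ) :
    (List.replicate k w).flatten.length = k * w.length := by
  induction k with
  | zero => simp
  | succ k ih => simp [List.replicate_succ, ih, Nat.succ_mul, Nat.add_comm]

lemma getElem_join_replicate {C : Type} (w : List C) (hw : 0 < w.length) :
    ∀ (k m : ℕ) (h : m < (List.replicate k w).flatten.length),
      (List.replicate k w).flatten[m] = w[m % w.length]'(Nat.mod_lt _ hw) := by
  intro k
  induction k with
  | zero => intro m h; simp at h
  | succ k ih =>
      intro m h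
      have e : (List.replicate (k + 1) w).flatten = w ++ (List.replicate k w).flatten := by
        simp [List.replicate_succ]
      have hlen : m < k * w.length + w.length := by
        rwa [length_join_replicate, Nat.succ_mul] at h
      rw [List.getElem_of_eq e]
      by_cases h1 : m < w.length
      · rw [List.getElem_append_left h1]
        congr 1
        exact (Nat.mod_eq_of_lt h1).symm
      · rw [List.getElem_append_right (le_of_not_gt h1)]
        rw [ih (m - w.length) (by rw [length_join_replicate]; omega)]
        congr 1
        exact (Nat.mod_eq_sub_mod (le_of_not_gt h1)).symm

/-- every general safety objective is `M_triv`-progress-consistent. -/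
theorem safety_trivial_progressConsistent {C : Type} [Nonempty C]
    (W : Set (ℕ → C))
    (hsafe : ∃ A : Set (List C), W = SafeObj A) :
    ∀ w₁ w₂ : List C, prefLt W w₁ (w₁ ++ w₂) → wcat w₁ (wpow w₂) ∈ W := by
  obtain ⟨A, rfl⟩ := hsafe
  intro w₁ w₂ ⟨hle, hnle⟩
  -- w₂ is nonempty
  have hw2 : w₂ ≠ [] := by
    rintro rfl
    exact hnle (by simpa using hle)
  have hw2len : 0 < w₂.length := List.length_pos_iff.mpr hw2
  -- extract a witness continuation after w₁ ++ w₂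
  have : ∃ x, x ∈ contAfter (SafeObj A) (w₁ ++ w₂) := by
    by_contra h
    push_neg at h
    exact hnle (fun y hy => absurd hy (h y))
  obtain ⟨x, hx⟩ := this
  -- pumping: for all k, wcat (w₁ ++ (replicate (k+1) w₂).flatten) x ∈ SafeObj A
  have pump : ∀ k : ℕ, wcat (w₁ ++ (List.replicate (k + 1) w₂).flatten) x ∈ SafeObj A := by
    intro k
    induction k with
    | zero =>
        simpa [List.replicate_succ, contAfter] using hx
    | succ k ih =>
        have step : wcat (List.replicate (k + 1) w₂).flatten x ∈ contAfter (SafeObj A) w₁ := by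
          simpa [contAfter, wcat_append] using ih
        have := hle step
        simp only [contAfter, Set.mem_setOf_eq, wcat_append] at this ⊢
        have e : (List.replicate (k + 1 + 1) w₂).flatten
            = w₂ ++ (List.replicate (k + 1) w₂).flatten := by
          simp [List.replicate_succ]
        rw [e, wcat_append]
        exact this
  -- agreement of wcat w₁ (wpow w₂) with pumped words on initial segments
  obtain ⟨a, l, rfl⟩ : ∃ a t, w₂ = a :: t := by
    cases w₂ with
    | nil => exact absurd rfl hw2
    | cons a t => exact ⟨a, t, rfl⟩
  set w₂ := a :: l
  have agree : ∀ (k n : ℕ), n < (w₁ ++ (List.replicate (k + 1) w₂).flatten).length →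
      wcat w₁ (wpow w₂) n = wcat (w₁ ++ (List.replicate (k + 1) w₂).flatten) x n := by
    intro k n hn
    rw [wcat_append]
    simp only [wcat]
    by_cases h1 : n < w₁.length
    · rw [dif_pos h1, dif_pos h1]
    · rw [dif_neg h1, dif_neg h1]
      have h2 : n - w₁.length < (List.replicate (k + 1) w₂).flatten.length := by
        simp only [List.length_append] at hn; omega
      rw [dif_pos h2]
      simp only [wpow, List.get_eq_getElem]
      rw [getElem_join_replicate w₂ hw2len _ _ h2]
  -- conclude
  intro hreach
  obtain ⟨n, hn⟩ := hreach
  -- pick k large enough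
  have hk : ∃ k : ℕ, n ≤ (w₁ ++ (List.replicate (k + 1) w₂).flatten).length := by
    refine ⟨n, ?_⟩
    simp only [List.length_append, length_join_replicate]
    calc n ≤ (n + 1) * 1 := by omega
      _ ≤ (n + 1) * w₂.length := Nat.mul_le_mul_left _ hw2len
      _ ≤ w₁.length + (n + 1) * w₂.length := Nat.le_add_left _ _
  obtain ⟨k, hkn⟩ := hk
  apply pump k
  refine ⟨n, ?_⟩
  convert hn using 2
  funext i
  exact (agree k i (lt_of_lt_of_le i.2 hkn)).symm

end RegularMemory
end
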